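/- Let Φ be a strictly incoherent operation (SIO) on a single qutrit. Fix p ∈ {1, 2, 3}, and let ρ be a qutrit density matrix whose Bloch vector t = (t₁, …, t₈) satisfies t_k = 0 for all k ∉ {p, p+3}. Let m = (m₁, …, m₈) be the Bloch vector of Φ(ρ). Then m_p² + m_{p+3}² ≤ t_p² + t_{p+3}². -/

import Mathlib

open Matrix ComplexOrder

/-- A matrix is an incoherent Kraus operator if each column contains at most
one nonzero entry. -/
def IsIncoherentKraus (K : Matrix (Fin 3) (Fin 3) ℂ) : Prop :=
  ∀ j i₁ i₂, K i₁ j ≠ 0 → K i₂ j ≠ 0 → i₁ = i₂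

/-- A matrix is a strictly incoherent Kraus operator if each row and each
column contains at most one nonzero entry. -/
def IsStrictlyIncoherentKraus (K : Matrix (Fin 3) (Fin 3) ℂ) : Prop :=
  IsIncoherentKraus K ∧ IsIncoherentKraus Kᴴ

/-- `Φ` is a strictly incoherent operation (SIO) on a qutrit. -/
def IsSIO (Φ : Matrix (Fin 3) (Fin 3) ℂ → Matrix (Fin 3) (Fin 3) ℂ) : Prop :=
  ∃ (n : ℕ) (K : Fin n → Matrix (Fin 3) (Fin 3) ℂ),
    (∀ i, IsStrictlyIncoherentKraus (K i)) ∧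
    (∑ i, (K i)ᴴ * K i = 1) ∧
    (∀ ρ, Φ ρ = ∑ i, K i * ρ * (K i)ᴴ)

/-- The 3×3 matrix unit with a 1 in row `j`, column `k` (0-indexed). -/
def E (j k : Fin 3) : Matrix (Fin 3) (Fin 3) ℂ := Matrix.single j k 1

/-- The fixed basis of traceless Hermitian 3×3 matrices (Gell-Mann matrices in
the ordering of the paper). -/
noncomputable def gm : Fin 8 → Matrix (Fin 3) (Fin 3) ℂ :=
  ![E 0 1 + E 1 0,
    E 0 2 + E 2 0,
    E 1 2 + E 2 1,
    (-Complex.I) • (E 0 1 - E 1 0),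
    (-Complex.I) • (E 0 2 - E 2 0),
    (-Complex.I) • (E 1 2 - E 2 1),
    Matrix.diagonal ![1, -1, 0],
    ((Real.sqrt 3 : ℂ))⁻¹ • Matrix.diagonal ![1, 1, -2]]

/-- The `i`-th Bloch coordinate of a qutrit state: `tᵢ = Tr(ρ λᵢ)`. -/
noncomputable def bloch (ρ : Matrix (Fin 3) (Fin 3) ℂ) (i : Fin 8) : ℝ :=
  ((ρ * gm i).trace).re

/-! ### Auxiliary lemmas -/

lemma gm_val0 : gm 0 = E 0 1 + E 1 0 := rfl
lemma gm_val1 : gm 1 = E 0 2 + E 2 0 := rfl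
lemma gm_val2 : gm 2 = E 1 2 + E 2 1 := rfl
lemma gm_val3 : gm 3 = (-Complex.I) • (E 0 1 - E 1 0) := rfl
lemma gm_val4 : gm 4 = (-Complex.I) • (E 0 2 - E 2 0) := rfl
lemma gm_val5 : gm 5 = (-Complex.I) • (E 1 2 - E 2 1) := rfl

lemma colsum (n : ℕ) (K : Fin n → Matrix (Fin 3) (Fin 3) ℂ)
    (hsum : ∑ i, (K i)ᴴ * K i = 1) (j : Fin 3) :
    ∑ i, ∑ r, Complex.normSq (K i r j) = 1 := by
  have h := congrArg (fun M : Matrix (Fin 3) (Fin 3) ℂ => M j j) hsum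
  simp only [Matrix.sum_apply, Matrix.mul_apply, Matrix.conjTranspose_apply,
    Matrix.one_apply_eq] at h
  have h2 : ((∑ i, ∑ r, (Complex.normSq (K i r j) : ℂ)) : ℂ) = 1 := by
    rw [← h]
    refine Finset.sum_congr rfl fun i _ => Finset.sum_congr rfl fun r _ => ?_
    rw [Complex.normSq_eq_conj_mul_self]; rfl
  exact_mod_cast h2

lemma expand_entry (A : Matrix (Fin 3) (Fin 3) ℂ) (hA : IsIncoherentKraus A)
    (j k : Fin 3) (hjk : j ≠ k) (ρ : Matrix (Fin 3) (Fin 3) ℂ)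
    (hz : ∀ a b : Fin 3, a ≠ b → ¬(a = j ∧ b = k) → ¬(a = k ∧ b = j) → ρ a b = 0) :
    (A * ρ * Aᴴ) j k =
      A j j * ρ j k * (starRingEnd ℂ) (A k k) + A j k * ρ k j * (starRingEnd ℂ) (A k j) := by
  classical
  have hstep : (A * ρ * Aᴴ) j k
      = ∑ x ∈ (Finset.univ ×ˢ Finset.univ : Finset (Fin 3 × Fin 3)),
          A j x.1 * ρ x.1 x.2 * (starRingEnd ℂ) (A k x.2) := by
    rw [Finset.sum_product]
    simp only [Matrix.mul_apply, Matrix.conjTranspose_apply, Finset.sum_mul]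
    rw [Finset.sum_comm]
    refine Finset.sum_congr rfl fun a _ => Finset.sum_congr rfl fun b _ => ?_
    simp [Complex.star_def]
  rw [hstep]
  have key : ∀ x ∈ (Finset.univ ×ˢ Finset.univ : Finset (Fin 3 × Fin 3)),
      x ∉ ({(j,k), (k,j)} : Finset (Fin 3 × Fin 3)) →
      A j x.1 * ρ x.1 x.2 * (starRingEnd ℂ) (A k x.2) = 0 := by
    rintro ⟨a, b⟩ - hx
    simp only [Finset.mem_insert, Finset.mem_singleton, Prod.mk.injEq, not_or, not_and] at hx
    by_cases hAj : A j a = 0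
    · simp [hAj]
    by_cases hAk : A k b = 0
    · simp [hAk]
    by_cases hab : a = b
    · subst hab
      exact absurd (hA a j k hAj hAk) hjk
    · rw [hz a b hab (by tauto) (by tauto)]; ring
  rw [← Finset.sum_subset (s₁ := ({(j,k),(k,j)} : Finset (Fin 3 × Fin 3))) (by simp) key]
  rw [Finset.sum_pair (by simp [hjk, Ne.symm hjk] : ((j,k) : Fin 3 × Fin 3) ≠ (k,j))]

lemma entry_bound (n : ℕ) (K : Fin n → Matrix (Fin 3) (Fin 3) ℂ)
    (hK : ∀ i, IsIncoherentKraus (K i)) (hsum : ∑ i, (K i)ᴴ * K i = 1)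
    (j k : Fin 3) (hjk : j ≠ k) (ρ : Matrix (Fin 3) (Fin 3) ℂ)
    (habs : ‖ρ k j‖ = ‖ρ j k‖)
    (hz : ∀ a b : Fin 3, a ≠ b → ¬(a = j ∧ b = k) → ¬(a = k ∧ b = j) → ρ a b = 0) :
    ‖(∑ i, K i * ρ * (K i)ᴴ) j k‖ ≤ ‖ρ j k‖ := by
  set r := ‖ρ j k‖ with hr
  have hrpos : 0 ≤ r := norm_nonneg _
  have hc1 : ∑ i, (Complex.normSq (K i j j) + Complex.normSq (K i k j)) ≤ 1 := by
    rw [← colsum n K hsum j]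
    refine Finset.sum_le_sum fun i _ => ?_
    rw [show Complex.normSq (K i j j) + Complex.normSq (K i k j)
        = ∑ a ∈ ({j, k} : Finset (Fin 3)), Complex.normSq (K i a j) from
        (Finset.sum_pair (f := fun a => Complex.normSq (K i a j)) hjk).symm]
    exact Finset.sum_le_sum_of_subset_of_nonneg (Finset.subset_univ _)
      (fun _ _ _ => Complex.normSq_nonneg _)
  have hc2 : ∑ i, (Complex.normSq (K i k k) + Complex.normSq (K i j k)) ≤ 1 := by
    rw [← colsum n K hsum k]
    refine Finset.sum_le_sum fun i _ => ?_
    rw [show Complex.normSq (K i k k) + Complex.normSq (K i j k)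
        = ∑ a ∈ ({k, j} : Finset (Fin 3)), Complex.normSq (K i a k) from
        (Finset.sum_pair (f := fun a => Complex.normSq (K i a k)) (Ne.symm hjk)).symm]
    exact Finset.sum_le_sum_of_subset_of_nonneg (Finset.subset_univ _)
      (fun _ _ _ => Complex.normSq_nonneg _)
  have hterm : ∀ i : Fin n, ‖(K i * ρ * (K i)ᴴ) j k‖ ≤
      r * ((Complex.normSq (K i j j) + Complex.normSq (K i k j)
        + (Complex.normSq (K i k k) + Complex.normSq (K i j k))) / 2) := by
    intro i
    rw [expand_entry (K i) (hK i) j k hjk ρ hz]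
    have h1 : ‖K i j j * ρ j k * (starRingEnd ℂ) (K i k k)
        + K i j k * ρ k j * (starRingEnd ℂ) (K i k j)‖ ≤
        ‖K i j j‖ * r * ‖K i k k‖
        + ‖K i j k‖ * r * ‖K i k j‖ := by
      refine le_trans (norm_add_le _ _) ?_
      simp only [norm_mul, Complex.norm_conj, habs, ← hr]
      exact le_refl _
    refine le_trans h1 ?_
    have e1 : ‖K i j j‖ ^ 2 = Complex.normSq (K i j j) := Complex.sq_norm _
    have e2 : ‖K i k k‖ ^ 2 = Complex.normSq (K i k k) := Complex.sq_norm _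
    have e3 : ‖K i j k‖ ^ 2 = Complex.normSq (K i j k) := Complex.sq_norm _
    have e4 : ‖K i k j‖ ^ 2 = Complex.normSq (K i k j) := Complex.sq_norm _
    nlinarith [norm_nonneg (K i j j), norm_nonneg (K i k k),
      norm_nonneg (K i j k), norm_nonneg (K i k j),
      sq_nonneg (‖K i j j‖ - ‖K i k k‖),
      sq_nonneg (‖K i j k‖ - ‖K i k j‖)]
  calc ‖(∑ i, K i * ρ * (K i)ᴴ) j k‖
      = ‖∑ i, (K i * ρ * (K i)ᴴ) j k‖ := by rw [Matrix.sum_apply]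
    _ ≤ ∑ i, ‖(K i * ρ * (K i)ᴴ) j k‖ := norm_sum_le _ _
    _ ≤ ∑ i, r * ((Complex.normSq (K i j j) + Complex.normSq (K i k j)
        + (Complex.normSq (K i k k) + Complex.normSq (K i j k))) / 2) :=
        Finset.sum_le_sum fun i _ => hterm i
    _ = r * ((∑ i, (Complex.normSq (K i j j) + Complex.normSq (K i k j))
        + ∑ i, (Complex.normSq (K i k k) + Complex.normSq (K i j k))) / 2) := by
        rw [← Finset.mul_sum]
        congr 1
        rw [← Finset.sum_add_distrib, Finset.sum_div]
    _ ≤ r * 1 := by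
        refine mul_le_mul_of_nonneg_left ?_ hrpos
        linarith
    _ = r := mul_one r

lemma hermEntry (σ : Matrix (Fin 3) (Fin 3) ℂ) (hσ : σ.IsHermitian) (a b : Fin 3) :
    σ b a = (starRingEnd ℂ) (σ a b) := by
  have := congrFun (congrFun hσ b) a
  simpa [Matrix.conjTranspose_apply] using this.symm

 set_option maxHeartbeats 1000000 in
lemma bloch_sq0 (σ : Matrix (Fin 3) (Fin 3) ℂ) (hσ : σ.IsHermitian) :
    bloch σ 0 ^ 2 + bloch σ 3 ^ 2 = 4 * Complex.normSq (σ 0 1) := by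
  have h10 := hermEntry σ hσ 0 1
  simp [bloch, gm_val0, gm_val1, gm_val2, gm_val3, gm_val4, gm_val5, E, Matrix.trace, Matrix.diag, Matrix.mul_apply,
    Matrix.single, Fin.sum_univ_three, h10, Complex.normSq_apply]
  ring

 set_option maxHeartbeats 1000000 in
lemma bloch_sq1 (σ : Matrix (Fin 3) (Fin 3) ℂ) (hσ : σ.IsHermitian) :
    bloch σ 1 ^ 2 + bloch σ 4 ^ 2 = 4 * Complex.normSq (σ 0 2) := by
  have h20 := hermEntry σ hσ 0 2
  simp [bloch, gm_val0, gm_val1, gm_val2, gm_val3, gm_val4, gm_val5, E, Matrix.trace, Matrix.diag, Matrix.mul_apply,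
    Matrix.single, Fin.sum_univ_three, h20, Complex.normSq_apply]
  ring

 set_option maxHeartbeats 1000000 in
lemma bloch_sq2 (σ : Matrix (Fin 3) (Fin 3) ℂ) (hσ : σ.IsHermitian) :
    bloch σ 2 ^ 2 + bloch σ 5 ^ 2 = 4 * Complex.normSq (σ 1 2) := by
  have h21 := hermEntry σ hσ 1 2
  simp [bloch, gm_val0, gm_val1, gm_val2, gm_val3, gm_val4, gm_val5, E, Matrix.trace, Matrix.diag, Matrix.mul_apply,
    Matrix.single, Fin.sum_univ_three, h21, Complex.normSq_apply]
  ring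

lemma entry_zero0 (σ : Matrix (Fin 3) (Fin 3) ℂ) (hσ : σ.IsHermitian)
    (h1 : bloch σ 0 = 0) (h2 : bloch σ 3 = 0) : σ 0 1 = 0 := by
  have h := bloch_sq0 σ hσ
  rw [h1, h2] at h
  have : Complex.normSq (σ 0 1) = 0 := by linarith [h.symm]
  exact Complex.normSq_eq_zero.mp this

lemma entry_zero1 (σ : Matrix (Fin 3) (Fin 3) ℂ) (hσ : σ.IsHermitian)
    (h1 : bloch σ 1 = 0) (h2 : bloch σ 4 = 0) : σ 0 2 = 0 := by
  have h := bloch_sq1 σ hσ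
  rw [h1, h2] at h
  have : Complex.normSq (σ 0 2) = 0 := by linarith [h.symm]
  exact Complex.normSq_eq_zero.mp this

lemma entry_zero2 (σ : Matrix (Fin 3) (Fin 3) ℂ) (hσ : σ.IsHermitian)
    (h1 : bloch σ 2 = 0) (h2 : bloch σ 5 = 0) : σ 1 2 = 0 := by
  have h := bloch_sq2 σ hσ
  rw [h1, h2] at h
  have : Complex.normSq (σ 1 2) = 0 := by linarith [h.symm]
  exact Complex.normSq_eq_zero.mp this

theorem sio_bloch_condition3
    (Φ : Matrix (Fin 3) (Fin 3) ℂ → Matrix (Fin 3) (Fin 3) ℂ) (hΦ : IsSIO Φ)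
    (p : Fin 8) (hp : (p : ℕ) < 3)
    (ρ : Matrix (Fin 3) (Fin 3) ℂ) (hρ : ρ.PosSemidef) (htr : ρ.trace = 1)
    (hsupp : ∀ k : Fin 8, k ≠ p → k ≠ p + 3 → bloch ρ k = 0) :
    (bloch (Φ ρ) p) ^ 2 + (bloch (Φ ρ) (p + 3)) ^ 2 ≤
      (bloch ρ p) ^ 2 + (bloch ρ (p + 3)) ^ 2 := by
  obtain ⟨n, K, hKstr, hKsum, hrep⟩ := hΦ
  have hherm : ρ.IsHermitian := hρ.1
  have hKi : ∀ i, IsIncoherentKraus (K i) := fun i => (hKstr i).1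
  have hΦherm : (Φ ρ).IsHermitian := by
    rw [hrep ρ]
    show (∑ i, K i * ρ * (K i)ᴴ)ᴴ = _
    rw [Matrix.conjTranspose_sum]
    refine Finset.sum_congr rfl fun i _ => ?_
    rw [Matrix.conjTranspose_mul, Matrix.conjTranspose_mul,
      Matrix.conjTranspose_conjTranspose, hherm.eq, mul_assoc]
  have hcases : p = 0 ∨ p = 1 ∨ p = 2 := by
    rcases p with ⟨pv, hpv⟩
    simp only [Fin.mk.injEq] at *
    interval_cases pv
    · left; rfl
    · right; left; rfl
    · right; right; rfl
  have main : ∀ j k : Fin 3, j ≠ k →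
      (∀ a b : Fin 3, a ≠ b → ¬(a = j ∧ b = k) → ¬(a = k ∧ b = j) → ρ a b = 0) →
      Complex.normSq ((Φ ρ) j k) ≤ Complex.normSq (ρ j k) := by
    intro j k hjk hz
    have habs : ‖ρ k j‖ = ‖ρ j k‖ := by
      rw [hermEntry ρ hherm j k, Complex.norm_conj]
    have hb := entry_bound n K hKi hKsum j k hjk ρ habs hz
    rw [← hrep ρ] at hb
    rw [← Complex.sq_norm, ← Complex.sq_norm]
    exact pow_le_pow_left₀ (norm_nonneg _) hb 2
  rcases hcases with rfl | rfl | rfl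
  · rw [show (0 : Fin 8) + 3 = 3 from rfl] at *
    have hz02 : ρ 0 2 = 0 :=
      entry_zero1 ρ hherm (hsupp 1 (by decide) (by decide)) (hsupp 4 (by decide) (by decide))
    have hz12 : ρ 1 2 = 0 :=
      entry_zero2 ρ hherm (hsupp 2 (by decide) (by decide)) (hsupp 5 (by decide) (by decide))
    have hz20 : ρ 2 0 = 0 := by rw [hermEntry ρ hherm 0 2, hz02]; simp
    have hz21 : ρ 2 1 = 0 := by rw [hermEntry ρ hherm 1 2, hz12]; simp
    rw [bloch_sq0 (Φ ρ) hΦherm, bloch_sq0 ρ hherm]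
    have hzf : ∀ a b : Fin 3, a ≠ b → ¬(a = 0 ∧ b = 1) → ¬(a = 1 ∧ b = 0) → ρ a b = 0 := by
      intro a b h1 h2 h3
      fin_cases a <;> fin_cases b <;>
        first
          | exact hz02
          | exact hz20
          | exact hz12
          | exact hz21
          | (exfalso; revert h1 h2 h3; decide)
    have := main 0 1 (by decide) hzf
    linarith
  · rw [show (1 : Fin 8) + 3 = 4 from rfl] at *
    have hz01 : ρ 0 1 = 0 :=
      entry_zero0 ρ hherm (hsupp 0 (by decide) (by decide)) (hsupp 3 (by decide) (by decide))
    have hz12 : ρ 1 2 = 0 :=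
      entry_zero2 ρ hherm (hsupp 2 (by decide) (by decide)) (hsupp 5 (by decide) (by decide))
    have hz10 : ρ 1 0 = 0 := by rw [hermEntry ρ hherm 0 1, hz01]; simp
    have hz21 : ρ 2 1 = 0 := by rw [hermEntry ρ hherm 1 2, hz12]; simp
    rw [bloch_sq1 (Φ ρ) hΦherm, bloch_sq1 ρ hherm]
    have hzf : ∀ a b : Fin 3, a ≠ b → ¬(a = 0 ∧ b = 2) → ¬(a = 2 ∧ b = 0) → ρ a b = 0 := by
      intro a b h1 h2 h3
      fin_cases a <;> fin_cases b <;>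
        first
          | exact hz01
          | exact hz10
          | exact hz12
          | exact hz21
          | (exfalso; revert h1 h2 h3; decide)
    have := main 0 2 (by decide) hzf
    linarith
  · rw [show (2 : Fin 8) + 3 = 5 from rfl] at *
    have hz01 : ρ 0 1 = 0 :=
      entry_zero0 ρ hherm (hsupp 0 (by decide) (by decide)) (hsupp 3 (by decide) (by decide))
    have hz02 : ρ 0 2 = 0 :=
      entry_zero1 ρ hherm (hsupp 1 (by decide) (by decide)) (hsupp 4 (by decide) (by decide))
    have hz10 : ρ 1 0 = 0 := by rw [hermEntry ρ hherm 0 1, hz01]; simp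
    have hz20 : ρ 2 0 = 0 := by rw [hermEntry ρ hherm 0 2, hz02]; simp
    rw [bloch_sq2 (Φ ρ) hΦherm, bloch_sq2 ρ hherm]
    have hzf : ∀ a b : Fin 3, a ≠ b → ¬(a = 1 ∧ b = 2) → ¬(a = 2 ∧ b = 1) → ρ a b = 0 := by
      intro a b h1 h2 h3
      fin_cases a <;> fin_cases b <;>
        first
          | exact hz01
          | exact hz10
          | exact hz02
          | exact hz20
          | (exfalso; revert h1 h2 h3; decide)
    have := main 1 2 (by decide) hzf
    linarith
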